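/- Fix an integer m ≥ 1 and let g be the unique R-valued function on words over {0,1,…,m} satisfying (K0)–(K3). Then for every word v that is not of the form (m,m,…,m), g(v) lies in the image of the polynomial ring ℤ[q,t,a] under the localization map ℤ[q,t,a] → R; that is, g(v) is a polynomial in q, t, a with no denominator. -/

import Mathlib

noncomputable section

/-- The polynomial ring `ℤ[q,t,a]`. -/
abbrev P : Type := MvPolynomial (Fin 3) ℤ

/-- The variable `q`. -/
def q : P := MvPolynomial.X 0
/-- The variable `t`. -/
def t : P := MvPolynomial.X 1
/-- The variable `a`. -/
def a : P := MvPolynomial.X 2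

/-- `R`, the localization of `ℤ[q,t,a]` at the element `1 - q`. -/
abbrev R : Type := Localization.Away (1 - q)

/-- The localization map `ℤ[q,t,a] → R`. -/
def φ : P →+* R := algebraMap P R

/-- `#{i : v_i < c}`, the number of entries of `v` strictly less than `c`. -/
def cntlt {m : ℕ} (c : ℕ) (v : List (Fin (m + 1))) : ℕ :=
  v.countP fun y => decide ((y : ℕ) < c)

/-- The relations (K0)–(K3) for a function `g` from words over `{0,1,…,m}` to `R`. -/
def Krel (m : ℕ) (g : List (Fin (m + 1)) → R) : Prop :=
  -- (K0)
  g [] = 1 ∧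
  g [(0 : Fin (m + 1))] = 1 + φ a ∧
  -- (K1a)
  (∀ v : List (Fin (m + 1)),
    g ((0 : Fin (m + 1)) :: Fin.last m :: v) =
      φ t ^ cntlt m v * g (v ++ [(⟨m - 1, by omega⟩ : Fin (m + 1))])) ∧
  -- (K1b)
  (∀ (x : Fin (m + 1)) (w : List (Fin (m + 1))), (x : ℕ) < m →
    g ((0 : Fin (m + 1)) :: x :: w) =
      (φ t ^ cntlt m (x :: w) + φ a) * g (x :: w)) ∧
  -- (K2)
  (∀ (v : List (Fin (m + 1))) (k : ℕ) (_hk1 : 1 ≤ k) (_hk2 : k ≤ m - 1),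
    g ((⟨k, by omega⟩ : Fin (m + 1)) :: v) =
      φ t ^ cntlt k v * g (v ++ [(⟨k - 1, by omega⟩ : Fin (m + 1))])) ∧
  -- (K3)
  (∀ v : List (Fin (m + 1)),
    g (Fin.last m :: v) =
      g (v ++ [(⟨m - 1, by omega⟩ : Fin (m + 1))]) + φ q * g (v ++ [Fin.last m]))


/-- sum of entries -/
def wsum (m : ℕ) (w : List (Fin (m+1))) : ℕ := (w.map Fin.val).sum

/-- number of leading `m`'s -/
def lead (m : ℕ) : List (Fin (m+1)) → ℕ
  | [] => 0
  | x :: w => if x = Fin.last m then lead m w + 1 else 0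

lemma wsum_cons (m : ℕ) (x : Fin (m+1)) (w : List (Fin (m+1))) :
    wsum m (x :: w) = (x : ℕ) + wsum m w := by simp [wsum]

lemma wsum_append (m : ℕ) (v : List (Fin (m+1))) (c : Fin (m+1)) :
    wsum m (v ++ [c]) = wsum m v + (c : ℕ) := by simp [wsum]

lemma lead_le_length (m : ℕ) (w : List (Fin (m+1))) : lead m w ≤ w.length := by
  induction w with
  | nil => simp [lead]
  | cons x w ih =>
    simp only [lead, List.length_cons]
    split <;> omega

lemma lead_append (m : ℕ) (v u : List (Fin (m+1))) (hv : ∃ x ∈ v, x ≠ Fin.last m) :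
    lead m (v ++ u) = lead m v := by
  induction v with
  | nil => simp at hv
  | cons x v ih =>
    simp only [List.cons_append, lead]
    by_cases hx : x = Fin.last m
    · simp only [hx, if_true]
      obtain ⟨y, hy, hy'⟩ := hv
      rcases List.mem_cons.mp hy with rfl | hy
      · exact absurd hx hy'
      · rw [ih ⟨y, hy, hy'⟩]
    · simp [hx]

/-- the combined measure, for words of length ≤ n -/
def meas (m n : ℕ) (w : List (Fin (m+1))) : ℕ :=
  (wsum m w * (n+1) + w.length) * (n+1) + lead m w

lemma meas_lt_of (m n : ℕ) (w w' : List (Fin (m+1))) (hl : w.length ≤ n)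
    (h : (wsum m w' + 1 ≤ wsum m w ∧ w'.length ≤ w.length) ∨
         (wsum m w' = wsum m w ∧ w'.length + 1 ≤ w.length) ∨
         (wsum m w' = wsum m w ∧ w'.length = w.length ∧ lead m w' + 1 ≤ lead m w)) :
    meas m n w' < meas m n w := by
  have hd : lead m w' ≤ w'.length := lead_le_length m w'
  unfold meas
  rcases h with ⟨hs, hl'⟩ | ⟨hs, hl'⟩ | ⟨hs, hl', hdd⟩
  · nlinarith [mul_le_mul_left hs ((n+1)*(n+1)),
      mul_le_mul_left (show w'.length ≤ n by omega) (n+1)]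
  · rw [hs]
    nlinarith [mul_le_mul_left (show w'.length ≤ n by omega) (1:ℕ)]
  · rw [hs, hl']
    omega

lemma key (m n : ℕ) (hm : 1 ≤ m) (g : List (Fin (m+1)) → R) (hg : Krel m g) :
    ∀ N (w : List (Fin (m+1))), meas m n w < N → w.length ≤ n →
      (∃ x ∈ w, x ≠ Fin.last m) → g w ∈ φ.range := by
  obtain ⟨h0, h0a, h1a, h1b, h2, h3⟩ := hg
  have hmlast : ((⟨m - 1, by omega⟩ : Fin (m + 1))) ≠ Fin.last m := by
    intro h
    have := congrArg Fin.val h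
    simp [Fin.last] at this
    omega
  intro N
  induction N with
  | zero => exact fun w h _ _ => absurd h (Nat.not_lt_zero _)
  | succ N ih =>
    intro w hM hlen hna
    match w with
    | [] => rw [h0]; exact one_mem _
    | x :: rest =>
      have hx : (x : ℕ) ≤ m := by omega
      rcases Nat.lt_or_ge (x : ℕ) m with hxm | hxm
      · -- x < m
        rcases Nat.eq_zero_or_pos (x : ℕ) with hx0 | hx0
        · -- x = 0
          have hx0' : x = 0 := by
            apply Fin.ext; simpa using hx0
          subst hx0'
          match rest with
          | [] => rw [h0a]; exact add_mem (one_mem _) (RingHom.mem_range_self _ _)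
          | y :: w' =>
            by_cases hy : y = Fin.last m
            · subst hy
              rw [h1a w']
              refine mul_mem (pow_mem (RingHom.mem_range_self _ _) _) (ih _ ?_ ?_ ?_)
              · refine lt_of_lt_of_le (meas_lt_of m n _ _ hlen ?_) (by omega)
                left
                constructor
                · rw [wsum_append, wsum_cons, wsum_cons]
                  simp [Fin.last]
                  omega
                · simp
              · simp at hlen ⊢; omega
              · exact ⟨_, List.mem_append_right _ (List.mem_singleton_self _), hmlast⟩
            · have hym : (y : ℕ) < m := by
                rcases Nat.lt_or_ge (y : ℕ) m with h | h
                · exact h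
                · exact absurd (Fin.ext (by simp [Fin.last]; omega)) hy
              rw [h1b y w' hym]
              refine mul_mem (add_mem (pow_mem (RingHom.mem_range_self _ _) _)
                (RingHom.mem_range_self _ _)) (ih _ ?_ ?_ ⟨y, List.mem_cons_self, hy⟩)
              · refine lt_of_lt_of_le (meas_lt_of m n _ _ hlen ?_) (by omega)
                right; left
                constructor
                · simp [wsum_cons]
                · simp
              · simp at hlen ⊢; omega
        · -- 1 ≤ x < m : K2
          have hk2 : (x : ℕ) ≤ m - 1 := by omega
          have := h2 rest (x : ℕ) hx0 hk2
          rw [Fin.eta] at this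
          rw [this]
          refine mul_mem (pow_mem (RingHom.mem_range_self _ _) _) (ih _ ?_ ?_ ?_)
          · refine lt_of_lt_of_le (meas_lt_of m n _ _ hlen ?_) (by omega)
            left
            constructor
            · rw [wsum_append, wsum_cons]; simp; omega
            · simp
          · simp at hlen ⊢; omega
          · refine ⟨_, List.mem_append_right _ (List.mem_singleton_self _), ?_⟩
            intro h
            have := congrArg Fin.val h
            simp [Fin.last] at this
            omega
      · -- x = m : K3
        have hx' : x = Fin.last m := Fin.ext (by simp [Fin.last]; omega)
        subst hx'
        have hrest : ∃ y ∈ rest, y ≠ Fin.last m := by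
          obtain ⟨y, hy, hy'⟩ := hna
          rcases List.mem_cons.mp hy with rfl | hy
          · exact absurd rfl hy'
          · exact ⟨y, hy, hy'⟩
        rw [h3 rest]
        refine add_mem (ih _ ?_ ?_ ?_) (mul_mem (RingHom.mem_range_self _ _) (ih _ ?_ ?_ ?_))
        · refine lt_of_lt_of_le (meas_lt_of m n _ _ hlen ?_) (by omega)
          left
          constructor
          · rw [wsum_append, wsum_cons]
            simp [Fin.last]
            omega
          · simp
        · simp at hlen ⊢; omega
        · exact ⟨_, List.mem_append_right _ (List.mem_singleton_self _), hmlast⟩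
        · refine lt_of_lt_of_le (meas_lt_of m n _ _ hlen ?_) (by omega)
          right; right
          refine ⟨?_, ?_, ?_⟩
          · rw [wsum_append, wsum_cons]; simp [Fin.last]; omega
          · simp
          · rw [lead_append m rest _ hrest]
            simp [lead]
        · simp at hlen ⊢; omega
        · obtain ⟨y, hy, hy'⟩ := hrest
          exact ⟨y, List.mem_append_left _ hy, hy'⟩

/-- For the unique `R`-valued function `g` satisfying (K0)–(K3): if `v` is not
of the form `(m,m,…,m)`, then `g(v)` lies in the image of `ℤ[q,t,a]` under the
localization map, i.e. `g(v)` is a polynomial in `q,t,a` with no denominator. -/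
theorem stmt6 (m : ℕ) (hm : 1 ≤ m) (g : List (Fin (m + 1)) → R) (hg : Krel m g)
    (v : List (Fin (m + 1))) (hv : v ≠ List.replicate v.length (Fin.last m)) :
    g v ∈ Set.range φ := by
  have hna : ∃ x ∈ v, x ≠ Fin.last m := by
    by_contra h
    push_neg at h
    exact hv (List.eq_replicate_iff.mpr ⟨rfl, h⟩)
  rw [← RingHom.coe_range]
  exact key m v.length hm g hg (meas m v.length v + 1) v (by omega) le_rfl hna
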